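/- Let F : Type u ⥤ Type u be a functor such that τ is sub-cartesian, i.e., for every injective map m : X → Y: F.map m is injective, τ_Y (F.map m t) = m '' (τ_X t) for all t : F.obj X, and every t' : F.obj Y with τ_Y t' ⊆ Set.range m lies in the range of F.map m. Then F preserves intersections: for every set X and every family of subsets (A_i) of X, the image of F.map applied to the inclusion (⋂ i, A_i) ↪ X equals the intersection of the images of F.map applied to the inclusions A_i ↪ X. -/

import Mathlib

open CategoryTheory

universe w u

/-- For a set functor `F`, `tau F t` is the set of elements of `X` that "occur" in
`t : F.obj X`: those `x` such that `t` does not factorize through the inclusion of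
`X \ {x}`. -/
def tau (F : Type u ⥤ Type u) {X : Type u} (t : F.obj X) : Set X :=
  {x : X | ¬ ∃ s : F.obj {y : X // y ≠ x}, F.map (TypeCat.ofHom (Subtype.val : {y : X // y ≠ x} → X)) s = t}

/-- A set functor preserves intersections: `F.map` of every injective map is injective, and
for every family of subsets `(A i)` of a set `X`, the image of `F.map` applied to the
inclusion of `⋂ i, A i` equals the intersection of the images of `F.map` applied to the
inclusions of the `A i`. -/
def SetPreservesIntersections (F : Type u ⥤ Type u) : Prop :=
  (∀ {X Y : Type u} (m : X → Y), Function.Injective m → Function.Injective (F.map (TypeCat.ofHom m))) ∧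
  ∀ {X : Type u} {ι : Sort w} (A : ι → Set X),
    Set.range (F.map (TypeCat.ofHom (Subtype.val : ↥(⋂ i, A i) → X))) =
      ⋂ i, Set.range (F.map (TypeCat.ofHom (Subtype.val : ↥(A i) → X)))
/-- **Gumm (converse):** if `tau` is a sub-cartesian transformation for `F`, then `F`
preserves intersections. -/
theorem preservesIntersections_of_tau_subCartesian
    (F : Type u ⥤ Type u)
    (h1 : ∀ {X Y : Type u} (m : X → Y), Function.Injective m →
      Function.Injective (F.map (TypeCat.ofHom m)))
    (h2 : ∀ {X Y : Type u} (m : X → Y), Function.Injective m →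
      ∀ t : F.obj X, tau F (F.map (TypeCat.ofHom m) t) = m '' tau F t)
    (h3 : ∀ {X Y : Type u} (m : X → Y), Function.Injective m →
      ∀ t' : F.obj Y, tau F t' ⊆ Set.range m → ∃ t : F.obj X, F.map (TypeCat.ofHom m) t = t') :
    SetPreservesIntersections.{w} F := by
  refine ⟨h1, fun {X} {ι} A => ?_⟩
  ext t'
  simp only [Set.mem_iInter, Set.mem_range]
  constructor
  · rintro ⟨s, rfl⟩ i
    refine ⟨F.map (TypeCat.ofHom (fun x => ⟨x.1, Set.mem_iInter.mp x.2 i⟩ : ↥(⋂ i, A i) → ↥(A i))) s, ?_⟩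
    rw [← types_comp_apply (F.map _) (F.map _), ← F.map_comp]
    rfl
  · intro h
    have hsub : tau F t' ⊆ Set.range (Subtype.val : ↥(⋂ i, A i) → X) := by
      rw [Subtype.range_val]
      intro x hx
      rw [Set.mem_iInter]
      intro i
      obtain ⟨s, hs⟩ := h i
      rw [← hs, h2 _ Subtype.val_injective] at hx
      obtain ⟨y, _, rfl⟩ := hx
      exact y.2
    exact h3 _ Subtype.val_injective t' hsub
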